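/- Let C ≥ 0, p ≥ 0 be real numbers and let F : Γ → ℂ satisfy |F(σ)| ≤ C·λ_σ^p for all σ ∈ Γ. Then for every real q > p + 1/2, the series ∑_{σ ∈ Γ} λ_σ^{-2q} |F(σ)|² converges, the series ∑_{σ ∈ Γ} λ_σ^{-2(q-p)} converges, and ‖F‖_{-q} ≤ C·(∑_{σ ∈ Γ} λ_σ^{-2(q-p)})^{1/2}. -/

import Mathlib

open scoped BigOperators

/-- `λ_σ = ∏_{k ∈ σ} (k+1)`, with `λ_∅ = 1`. -/
noncomputable def lam (σ : Finset ℕ) : ℝ := ∏ k ∈ σ, ((k : ℝ) + 1)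

lemma lam_pos (σ : Finset ℕ) : 0 < lam σ :=
  Finset.prod_pos fun k _ => by positivity

lemma lam_rpow (σ : Finset ℕ) (r : ℝ) :
    lam σ ^ r = ∏ k ∈ σ, ((k : ℝ) + 1) ^ r := by
  rw [lam, ← Real.finset_prod_rpow σ _ (fun k _ => by positivity)]

lemma summable_lam_neg {r : ℝ} (hr : 1 < r) :
    Summable (fun σ : Finset ℕ => lam σ ^ (-r)) := by
  set a : ℕ → ℝ := fun k => ((k : ℝ) + 1) ^ (-r) with ha
  have ha0 : ∀ k, 0 ≤ a k := fun k => Real.rpow_nonneg (by positivity) _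
  have hsa : Summable a := by
    have h0 : Summable fun n : ℕ => (n : ℝ) ^ (-r) := Real.summable_nat_rpow.2 (by linarith)
    have h1 : Summable fun n : ℕ => ((n + 1 : ℕ) : ℝ) ^ (-r) := (summable_nat_add_iff 1).2 h0
    exact h1.congr fun k => by simp [ha]
  refine summable_of_sum_le (c := Real.exp (∑' k, a k))
    (fun σ => Real.rpow_nonneg (Finset.prod_pos fun k _ => by positivity).le _) ?_
  intro u
  have key : ∀ σ ∈ u, lam σ ^ (-r) = ∏ k ∈ σ, a k := fun σ _ => lam_rpow σ (-r)
  rw [Finset.sum_congr rfl key]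
  set T : Finset ℕ := u.sup id with hT
  have hsub : u ⊆ T.powerset := fun σ hσ =>
    Finset.mem_powerset.2 (Finset.le_sup (f := id) hσ)
  calc ∑ σ ∈ u, ∏ k ∈ σ, a k
      ≤ ∑ σ ∈ T.powerset, ∏ k ∈ σ, a k :=
        Finset.sum_le_sum_of_subset_of_nonneg hsub
          (fun σ _ _ => Finset.prod_nonneg fun k _ => ha0 k)
    _ = ∏ k ∈ T, (a k + 1) := by
        rw [Finset.prod_add]; simp
    _ ≤ ∏ k ∈ T, Real.exp (a k) := by
        refine Finset.prod_le_prod (fun k _ => by positivity) (fun k _ => ?_)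
        have := Real.add_one_le_exp (a k)
        linarith
    _ = Real.exp (∑ k ∈ T, a k) := by rw [Real.exp_sum]
    _ ≤ Real.exp (∑' k, a k) :=
        Real.exp_le_exp.2 (Summable.sum_le_tsum T (fun k _ => ha0 k) hsa)

theorem stmt1 (C p : ℝ) (hC : 0 ≤ C) (hp : 0 ≤ p) (F : Finset ℕ → ℂ)
    (hF : ∀ σ : Finset ℕ, ‖F σ‖ ≤ C * lam σ ^ p)
    (q : ℝ) (hq : p + 1 / 2 < q) :
    Summable (fun σ : Finset ℕ => lam σ ^ (-(2 * q)) * ‖F σ‖ ^ 2) ∧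
    Summable (fun σ : Finset ℕ => lam σ ^ (-(2 * (q - p)))) ∧
    Real.sqrt (∑' σ : Finset ℕ, lam σ ^ (-(2 * q)) * ‖F σ‖ ^ 2)
      ≤ C * Real.sqrt (∑' σ : Finset ℕ, lam σ ^ (-(2 * (q - p)))) := by
  have h2 : Summable (fun σ : Finset ℕ => lam σ ^ (-(2 * (q - p)))) :=
    summable_lam_neg (by linarith)
  have hbound : ∀ σ : Finset ℕ,
      lam σ ^ (-(2 * q)) * ‖F σ‖ ^ 2 ≤ C ^ 2 * lam σ ^ (-(2 * (q - p))) := by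
    intro σ
    have hl := lam_pos σ
    have h1 : ‖F σ‖ ^ 2 ≤ (C * lam σ ^ p) ^ 2 := by
      have := hF σ
      have h0 : (0:ℝ) ≤ ‖F σ‖ := norm_nonneg _
      nlinarith
    calc lam σ ^ (-(2 * q)) * ‖F σ‖ ^ 2
        ≤ lam σ ^ (-(2 * q)) * (C * lam σ ^ p) ^ 2 := by
          have : (0:ℝ) ≤ lam σ ^ (-(2 * q)) := Real.rpow_nonneg hl.le _
          nlinarith
      _ = C ^ 2 * lam σ ^ (-(2 * (q - p))) := by
          rw [mul_pow, ← Real.rpow_natCast (lam σ ^ p) 2, ← Real.rpow_mul hl.le,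
            show -(2 * (q - p)) = -(2 * q) + p * (2:ℕ) by push_cast; ring,
            Real.rpow_add hl]
          ring
  have h1 : Summable (fun σ : Finset ℕ => lam σ ^ (-(2 * q)) * ‖F σ‖ ^ 2) := by
    refine Summable.of_nonneg_of_le (fun σ => mul_nonneg (Real.rpow_nonneg (lam_pos σ).le _) (sq_nonneg _)) hbound (h2.mul_left _)
  refine ⟨h1, h2, ?_⟩
  have hts : (∑' σ : Finset ℕ, lam σ ^ (-(2 * q)) * ‖F σ‖ ^ 2)
      ≤ C ^ 2 * ∑' σ : Finset ℕ, lam σ ^ (-(2 * (q - p))) := by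
    rw [← tsum_mul_left]
    exact Summable.tsum_le_tsum hbound h1 (h2.mul_left _)
  calc Real.sqrt (∑' σ : Finset ℕ, lam σ ^ (-(2 * q)) * ‖F σ‖ ^ 2)
      ≤ Real.sqrt (C ^ 2 * ∑' σ : Finset ℕ, lam σ ^ (-(2 * (q - p)))) :=
        Real.sqrt_le_sqrt hts
    _ = C * Real.sqrt (∑' σ : Finset ℕ, lam σ ^ (-(2 * (q - p)))) := by
        rw [Real.sqrt_mul (by positivity), Real.sqrt_sq hC]
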